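/- Work in ℝ³. Let u, f : ℝ³ → ℝ³ be C¹ and compactly supported with div u(x) = 0 for all x, and let A1, A2, A3, A4, A5 ∈ ℝ satisfy A1 − A3 = 0, A5 − A4 = 0, and A2 = A4. Then for every constant vector e ∈ ℝ³: ∫ ⟨f_m(x), x × e⟩ dx = 0 (× the cross product); that is, the mass-diffusion correction f_m produces no net angular momentum. -/

import Mathlib

open MeasureTheory RealInnerProductSpace

/-- `div v x = tr (Dv(x))`. -/
noncomputable def vdiv
    (v : EuclideanSpace ℝ (Fin 3) → EuclideanSpace ℝ (Fin 3))
    (x : EuclideanSpace ℝ (Fin 3)) : ℝ :=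
  LinearMap.trace ℝ _ (fderiv ℝ v x).toLinearMap

/-- The viscous momentum flux
`f_m = A1 (Df)*[u] + A2 Df[u] + A3 (Du)*[f] + A4 Du[f] + A5 (div f) u`. -/
noncomputable def viscFlux (A1 A2 A3 A4 A5 : ℝ)
    (u f : EuclideanSpace ℝ (Fin 3) → EuclideanSpace ℝ (Fin 3))
    (x : EuclideanSpace ℝ (Fin 3)) : EuclideanSpace ℝ (Fin 3) :=
  A1 • (ContinuousLinearMap.adjoint (fderiv ℝ f x)) (u x)
    + A2 • (fderiv ℝ f x) (u x)
    + A3 • (ContinuousLinearMap.adjoint (fderiv ℝ u x)) (f x)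
    + A4 • (fderiv ℝ u x) (f x)
    + A5 • (vdiv f x • u x)

/-- The cross product on `ℝ³`. -/
noncomputable def cross (a b : EuclideanSpace ℝ (Fin 3)) : EuclideanSpace ℝ (Fin 3) :=
  (WithLp.equiv 2 (Fin 3 → ℝ)).symm
    ![a 1 * b 2 - a 2 * b 1, a 2 * b 0 - a 0 * b 2, a 0 * b 1 - a 1 * b 0]

local notation "E3" => EuclideanSpace ℝ (Fin 3)

/-! ### Auxiliary lemmas -/

lemma vdiv_eq (v : E3 → E3) (x : E3) :
    vdiv v x = ∑ i, fderiv ℝ v x (EuclideanSpace.single i 1) i := by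
  rw [vdiv, LinearMap.trace_eq_matrix_trace ℝ (EuclideanSpace.basisFun (Fin 3) ℝ).toBasis,
    Matrix.trace]
  simp [Matrix.diag, LinearMap.toMatrix_apply]

/-- The linear map `x ↦ x × e` as a continuous linear map. -/
noncomputable def crossL (e : E3) : E3 →L[ℝ] E3 :=
  LinearMap.toContinuousLinearMap <|
  { toFun := fun x => cross x e
    map_add' := by intro a b; ext i; fin_cases i <;> simp [cross] <;> ring
    map_smul' := by intro c a; ext i; fin_cases i <;> simp [cross] <;> ring }

lemma crossL_apply (e x : E3) : crossL e x = cross x e := rfl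

lemma fderiv_crossFun (e x : E3) : fderiv ℝ (fun y : E3 => cross y e) x = crossL e := by
  have h : (fun y : E3 => cross y e) = ⇑(crossL e) := rfl
  rw [h, ContinuousLinearMap.fderiv]

lemma cross_antisym (e a b : E3) : ⟪cross a e, b⟫ + ⟪a, cross b e⟫ = 0 := by
  simp [cross, PiLp.inner_apply, Fin.sum_univ_three]
  ring

lemma vdiv_cross (e x : E3) : vdiv (fun y : E3 => cross y e) x = 0 := by
  rw [vdiv_eq]
  simp only [fderiv_crossFun, crossL_apply]
  rw [Fin.sum_univ_three]
  simp [cross, EuclideanSpace.single_apply]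

lemma clm_sum_single (L : E3 →L[ℝ] ℝ) (v : E3) :
    ∑ i, L (EuclideanSpace.single i 1) * v i = L v := by
  conv_rhs => rw [← (EuclideanSpace.basisFun (Fin 3) ℝ).sum_repr v]
  rw [map_sum]
  simp [EuclideanSpace.basisFun_apply, EuclideanSpace.basisFun_repr, mul_comm]

lemma vdiv_add (F G : E3 → E3) (x : E3) (hF : DifferentiableAt ℝ F x)
    (hG : DifferentiableAt ℝ G x) :
    vdiv (fun y => F y + G y) x = vdiv F x + vdiv G x := by
  simp only [vdiv_eq, fderiv_fun_add hF hG, ContinuousLinearMap.add_apply, PiLp.add_apply,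
    Finset.sum_add_distrib]

lemma vdiv_smul (c : E3 → ℝ) (F : E3 → E3) (x : E3) (hc : DifferentiableAt ℝ c x)
    (hF : DifferentiableAt ℝ F x) :
    vdiv (fun y => c y • F y) x = fderiv ℝ c x (F x) + c x * vdiv F x := by
  simp only [vdiv_eq, fderiv_fun_smul hc hF, ContinuousLinearMap.add_apply,
    ContinuousLinearMap.coe_smul', Pi.smul_apply, ContinuousLinearMap.smulRight_apply,
    PiLp.add_apply, PiLp.smul_apply, smul_eq_mul, Finset.sum_add_distrib, Finset.mul_sum]
  rw [clm_sum_single]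
  ring

lemma integral_fderiv_coord_zero (g : E3 → ℝ) (hg : ContDiff ℝ 1 g)
    (hcg : HasCompactSupport g) (v : E3) :
    ∫ x, fderiv ℝ g x v = 0 := by
  have h1 : Integrable (fun x : E3 => fderiv ℝ (fun _ : E3 => (1:ℝ)) x v * g x) volume := by
    have h : (fun x : E3 => fderiv ℝ (fun _ : E3 => (1:ℝ)) x v * g x) = fun _ => 0 := by
      funext x; simp [fderiv_fun_const]
    rw [h]; exact integrable_zero _ _ _
  have hcont : Continuous fun x : E3 => fderiv ℝ g x v :=
    (ContinuousLinearMap.apply ℝ ℝ v).continuous.comp (hg.continuous_fderiv one_ne_zero)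
  have hcs : HasCompactSupport fun x : E3 => fderiv ℝ g x v :=
    (hcg.fderiv ℝ).comp_left (g := fun L : E3 →L[ℝ] ℝ => L v) rfl
  have h2 : Integrable (fun x : E3 => (1:ℝ) * fderiv ℝ g x v) volume := by
    simpa [one_mul] using hcont.integrable_of_hasCompactSupport hcs
  have h3 : Integrable (fun x : E3 => (1:ℝ) * g x) volume := by
    simpa [one_mul] using hg.continuous.integrable_of_hasCompactSupport hcg
  have h := integral_mul_fderiv_eq_neg_fderiv_mul_of_integrable (μ := volume)
    h1 h2 h3 (fun y _ => differentiableAt_const (1:ℝ)) (fun y _ => hg.differentiable one_ne_zero y)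
  simpa [fderiv_fun_const] using h

/-- The divergence theorem on `ℝ³` for compactly supported `C¹` fields. -/
lemma integral_vdiv (W : E3 → E3) (hW : ContDiff ℝ 1 W) (hcW : HasCompactSupport W) :
    ∫ x, vdiv W x = 0 := by
  have hWi : ∀ i : Fin 3, ContDiff ℝ 1 (fun x : E3 => W x i) := by
    intro i
    exact ((EuclideanSpace.proj i : E3 →L[ℝ] ℝ).contDiff).comp hW
  have hci : ∀ i : Fin 3, HasCompactSupport (fun x : E3 => W x i) := fun i =>
    hcW.comp_left (g := fun w : E3 => w i) rfl
  have hfd : ∀ (i : Fin 3) (x v : E3), fderiv ℝ (fun x : E3 => W x i) x v = fderiv ℝ W x v i := by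
    intro i x v
    have h : HasFDerivAt (fun y : E3 => W y i)
        ((EuclideanSpace.proj i).comp (fderiv ℝ W x)) x :=
      (EuclideanSpace.proj (𝕜 := ℝ) i).hasFDerivAt.comp x (hW.differentiable one_ne_zero x).hasFDerivAt
    rw [h.fderiv]; rfl
  have intble : ∀ i : Fin 3,
      Integrable (fun x : E3 => fderiv ℝ W x (EuclideanSpace.single i 1) i) volume := by
    intro i
    have hcont : Continuous fun x : E3 => fderiv ℝ W x (EuclideanSpace.single i 1) i :=
      (EuclideanSpace.proj i).continuous.comp
        ((ContinuousLinearMap.apply ℝ _ (EuclideanSpace.single i (1:ℝ))).continuous.comp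
          (hW.continuous_fderiv one_ne_zero))
    apply hcont.integrable_of_hasCompactSupport
    exact (hcW.fderiv ℝ).comp_left
      (g := fun L : E3 →L[ℝ] E3 => L (EuclideanSpace.single i 1) i) (by simp)
  have key : ∀ i : Fin 3, ∫ x, fderiv ℝ W x (EuclideanSpace.single i 1) i = 0 := by
    intro i
    have h := integral_fderiv_coord_zero (fun x => W x i) (hWi i) (hci i)
      (EuclideanSpace.single i 1)
    simpa [hfd] using h
  calc ∫ x, vdiv W x
      = ∫ x, ∑ i : Fin 3, fderiv ℝ W x (EuclideanSpace.single i 1) i := by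
        simp only [vdiv_eq]
    _ = ∑ i : Fin 3, ∫ x, fderiv ℝ W x (EuclideanSpace.single i 1) i :=
        integral_finset_sum _ (fun i _ => intble i)
    _ = 0 := by simp [key]

lemma pointwise_viscFlux (u f : E3 → E3) (hu : ContDiff ℝ 1 u) (hf : ContDiff ℝ 1 f)
    (a b : ℝ) (e x : E3) (hdivu : vdiv u x = 0) :
    ⟪viscFlux a b a b b u f x, cross x e⟫ =
      vdiv (fun y => (a * ⟪u y, f y⟫) • cross y e
        + ((b * ⟪u y, cross y e⟫) • f y + (b * ⟪f y, cross y e⟫) • u y)) x := by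
  have hu' : Differentiable ℝ u := hu.differentiable one_ne_zero
  have hf' : Differentiable ℝ f := hf.differentiable one_ne_zero
  have hφ : Differentiable ℝ (fun y : E3 => cross y e) := (crossL e).differentiable
  have hc1 : DifferentiableAt ℝ (fun y => a * ⟪u y, f y⟫) x :=
    (differentiableAt_const a).mul ((hu' x).inner ℝ (hf' x))
  have hc2 : DifferentiableAt ℝ (fun y => b * ⟪u y, cross y e⟫) x :=
    (differentiableAt_const b).mul ((hu' x).inner ℝ (hφ x))
  have hc3 : DifferentiableAt ℝ (fun y => b * ⟪f y, cross y e⟫) x :=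
    (differentiableAt_const b).mul ((hf' x).inner ℝ (hφ x))
  have d1 : DifferentiableAt ℝ (fun y => (a * ⟪u y, f y⟫) • cross y e) x := hc1.smul (hφ x)
  have d2 : DifferentiableAt ℝ (fun y => (b * ⟪u y, cross y e⟫) • f y) x := hc2.smul (hf' x)
  have d3 : DifferentiableAt ℝ (fun y => (b * ⟪f y, cross y e⟫) • u y) x := hc3.smul (hu' x)
  rw [vdiv_add _ _ x d1 (d2.fun_add d3), vdiv_add _ _ x d2 d3,
    vdiv_smul _ _ x hc1 (hφ x), vdiv_smul _ _ x hc2 (hf' x), vdiv_smul _ _ x hc3 (hu' x),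
    vdiv_cross, hdivu]
  rw [fderiv_const_mul ((hu' x).inner ℝ (hf' x)) a,
    fderiv_const_mul ((hu' x).inner ℝ (hφ x)) b,
    fderiv_const_mul ((hf' x).inner ℝ (hφ x)) b]
  simp only [ContinuousLinearMap.coe_smul', Pi.smul_apply, smul_eq_mul]
  rw [fderiv_inner_apply ℝ (hu' x) (hf' x), fderiv_inner_apply ℝ (hu' x) (hφ x),
    fderiv_inner_apply ℝ (hf' x) (hφ x)]
  simp only [fderiv_crossFun, crossL_apply]
  simp only [viscFlux, inner_add_left, real_inner_smul_left,
    ContinuousLinearMap.adjoint_inner_left]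
  have hanti : ⟪f x, cross (u x) e⟫ + ⟪u x, cross (f x) e⟫ = 0 := by
    rw [real_inner_comm]; exact cross_antisym e (u x) (f x)
  rw [real_inner_comm (f x) (fderiv ℝ u x (cross x e))]
  linear_combination (-b) * hanti

/-- Part 3 of Theorem 2: if `A1 − A3 = 0`, `A5 − A4 = 0` and `A2 = A4`, the
mass-diffusion correction `f_m` produces no net angular momentum. -/
theorem viscFlux_angular_momentum
    (u f : EuclideanSpace ℝ (Fin 3) → EuclideanSpace ℝ (Fin 3))
    (hu : ContDiff ℝ 1 u) (hf : ContDiff ℝ 1 f)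
    (hcu : HasCompactSupport u) (hcf : HasCompactSupport f)
    (hdiv : ∀ x, vdiv u x = 0)
    (A1 A2 A3 A4 A5 : ℝ)
    (h1 : A1 - A3 = 0) (h2 : A5 - A4 = 0) (h3 : A2 = A4)
    (e : EuclideanSpace ℝ (Fin 3)) :
    ∫ x, ⟪viscFlux A1 A2 A3 A4 A5 u f x, cross x e⟫ = 0 := by
  have e1 : A1 = A3 := by linarith
  have e5 : A5 = A4 := by linarith
  simp only [e1, e5, h3]
  set W : E3 → E3 := fun y => (A3 * ⟪u y, f y⟫) • cross y e
      + ((A4 * ⟪u y, cross y e⟫) • f y + (A4 * ⟪f y, cross y e⟫) • u y) with hWdef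
  have hφc : ContDiff ℝ 1 (fun y : E3 => cross y e) := (crossL e).contDiff
  have hWc : ContDiff ℝ 1 W :=
    ((contDiff_const.mul (hu.inner ℝ hf)).smul hφc).add
      (((contDiff_const.mul (hu.inner ℝ hφc)).smul hf).add
        ((contDiff_const.mul (hf.inner ℝ hφc)).smul hu))
  have hW1 : HasCompactSupport (fun y : E3 => (A3 * ⟪u y, f y⟫) • cross y e) := by
    apply hcu.mono'
    intro y hy
    apply subset_tsupport
    simp only [Function.mem_support] at hy ⊢
    intro h0
    exact hy (by simp [h0])
  have hW2 : HasCompactSupport (fun y : E3 => (A4 * ⟪u y, cross y e⟫) • f y) := by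
    apply hcf.mono'
    intro y hy
    apply subset_tsupport
    simp only [Function.mem_support] at hy ⊢
    intro h0
    exact hy (by simp [h0])
  have hW3 : HasCompactSupport (fun y : E3 => (A4 * ⟪f y, cross y e⟫) • u y) := by
    apply hcu.mono'
    intro y hy
    apply subset_tsupport
    simp only [Function.mem_support] at hy ⊢
    intro h0
    exact hy (by simp [h0])
  have hWcs : HasCompactSupport W := hW1.add (hW2.add hW3)
  have hpt : ∀ x, ⟪viscFlux A3 A4 A3 A4 A4 u f x, cross x e⟫ = vdiv W x := fun x =>
    pointwise_viscFlux u f hu hf A3 A4 e x (hdiv x)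
  calc ∫ x, ⟪viscFlux A3 A4 A3 A4 A4 u f x, cross x e⟫
      = ∫ x, vdiv W x := by simp only [hpt]
    _ = 0 := integral_vdiv W hWc hWcs
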